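/- Let k be a field and X a type; in F := FreeLieAlgebra k (X ⊕ X), with plain generators x̄ and dotted generators ẋ, let φ : F → F be the unique Lie algebra homomorphism with φ(x̄) = x̄ and φ(ẋ) = x̄. Let V₂ be the smallest k-submodule of F containing all ẋ and closed under the two di-algebra operations (for a, b ∈ V₂: ⁅φ(a), b⁆ ∈ V₂ and ⁅a, φ(b)⁆ ∈ V₂). Let S ⊆ V₂ and let J be the smallest k-submodule of F containing S such that for all j ∈ J and v ∈ V₂ one has ⁅φ(v), j⁆ ∈ J, ⁅j, φ(v)⁆ ∈ J, ⁅v, φ(j)⁆ ∈ J, and ⁅φ(j), v⁆ ∈ J. Then J equals the intersection (as submodules of F) of V₂ with the Lie ideal of F generated by S ∪ φ(S). -/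

import Mathlib

open scoped TensorProduct

noncomputable instance auxLieAlgRestrict (k A L : Type*) [CommRing k] [CommRing A] [Algebra k A]
    [LieRing L] [LieAlgebra k L] : LieAlgebra k (A ⊗[k] L) where
  lie_smul c x y := by rw [← algebraMap_smul A c y, lie_smul, algebraMap_smul]

/-- `a ↦ 1 ⊗ a` as a Lie algebra hom into the base change. -/
noncomputable def auxOneTmul (k A L : Type*) [CommRing k] [CommRing A] [Algebra k A]
    [LieRing L] [LieAlgebra k L] : L →ₗ⁅k⁆ A ⊗[k] L :=
  { TensorProduct.mk k A L 1 with
    map_lie' := by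
      intro x y
      show (1 : A) ⊗ₜ[k] ⁅x, y⁆ = ⁅(1 : A) ⊗ₜ[k] x, (1 : A) ⊗ₜ[k] y⁆
      rw [LieAlgebra.ExtendScalars.bracket_tmul, one_mul] }

@[simp] lemma auxOneTmul_apply (k A L : Type*) [CommRing k] [CommRing A] [Algebra k A]
    [LieRing L] [LieAlgebra k L] (a : L) : auxOneTmul k A L a = (1 : A) ⊗ₜ[k] a := rfl

/-- A Lie subalgebra of a free Lie algebra containing all generators is everything. -/
lemma auxMemOfSubalgebra {k Y : Type*} [CommRing k]
    (A : LieSubalgebra k (FreeLieAlgebra k Y)) (h : ∀ y : Y, FreeLieAlgebra.of k y ∈ A)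
    (a : FreeLieAlgebra k Y) : a ∈ A := by
  let g : FreeLieAlgebra k Y →ₗ⁅k⁆ A := FreeLieAlgebra.lift k fun y => ⟨FreeLieAlgebra.of k y, h y⟩
  have hcomp : A.incl.comp g = LieHom.id := by
    apply FreeLieAlgebra.hom_ext
    intro y
    simp [g, FreeLieAlgebra.lift_of_apply]
  have : A.incl (g a) = a := by
    have := DFunLike.congr_fun hcomp a
    simpa using this
  rw [← this]
  exact (g a).2

/-- A submodule of a free Lie algebra stable under bracketing with generators is stable under
bracketing with everything. -/
lemma auxBracketClosure {k Y : Type*} [CommRing k]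
    (K : Submodule k (FreeLieAlgebra k Y))
    (h : ∀ y : Y, ∀ m ∈ K, ⁅FreeLieAlgebra.of k y, m⁆ ∈ K) :
    ∀ x : FreeLieAlgebra k Y, ∀ m ∈ K, ⁅x, m⁆ ∈ K := by
  let A : LieSubalgebra k (FreeLieAlgebra k Y) :=
    { carrier := {x | ∀ m ∈ K, ⁅x, m⁆ ∈ K}
      add_mem' := by intro a b ha hb m hm; rw [add_lie]; exact K.add_mem (ha m hm) (hb m hm)
      zero_mem' := by intro m hm; rw [zero_lie]; exact K.zero_mem
      smul_mem' := by intro c a ha m hm; rw [smul_lie]; exact K.smul_mem c (ha m hm)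
      lie_mem' := by
        intro a b ha hb m hm
        rw [lie_lie]
        exact K.sub_mem (ha _ (hb m hm)) (hb _ (ha m hm)) }
  intro x
  exact auxMemOfSubalgebra A h x

theorem dialgebra_ideal_eq_inter (k : Type*) [Field k] (X : Type*)
    (φ : FreeLieAlgebra k (X ⊕ X) →ₗ⁅k⁆ FreeLieAlgebra k (X ⊕ X))
    (hφl : ∀ x : X, φ (FreeLieAlgebra.of k (Sum.inl x)) = FreeLieAlgebra.of k (Sum.inl x))
    (hφr : ∀ x : X, φ (FreeLieAlgebra.of k (Sum.inr x)) = FreeLieAlgebra.of k (Sum.inl x))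
    (V₂ : Submodule k (FreeLieAlgebra k (X ⊕ X)))
    (hV₂ : V₂ = sInf {W : Submodule k (FreeLieAlgebra k (X ⊕ X)) |
        (∀ x : X, FreeLieAlgebra.of k (Sum.inr x) ∈ W) ∧
        ∀ a b : FreeLieAlgebra k (X ⊕ X), a ∈ W → b ∈ W → ⁅φ a, b⁆ ∈ W ∧ ⁅a, φ b⁆ ∈ W})
    (S : Set (FreeLieAlgebra k (X ⊕ X))) (hS : S ⊆ (V₂ : Set (FreeLieAlgebra k (X ⊕ X)))) :
    sInf {J : Submodule k (FreeLieAlgebra k (X ⊕ X)) |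
        S ⊆ (J : Set (FreeLieAlgebra k (X ⊕ X))) ∧
        ∀ j ∈ J, ∀ v ∈ V₂, ⁅φ v, j⁆ ∈ J ∧ ⁅j, φ v⁆ ∈ J ∧ ⁅v, φ j⁆ ∈ J ∧ ⁅φ j, v⁆ ∈ J} =
      V₂ ⊓
        LieSubmodule.toSubmodule
          (LieSubmodule.lieSpan k (FreeLieAlgebra k (X ⊕ X)) (S ∪ φ '' S)) := by
  classical
  -- basic facts about φ
  have hφ2 : ∀ a : FreeLieAlgebra k (X ⊕ X), φ (φ a) = φ a := by
    have : φ.comp φ = φ := by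
      apply FreeLieAlgebra.hom_ext
      rintro (x | x) <;> simp [hφl, hφr]
    intro a; exact DFunLike.congr_fun this a
  set famJ : Set (Submodule k (FreeLieAlgebra k (X ⊕ X))) :=
    {J : Submodule k (FreeLieAlgebra k (X ⊕ X)) |
      S ⊆ (J : Set (FreeLieAlgebra k (X ⊕ X))) ∧
      ∀ j ∈ J, ∀ v ∈ V₂, ⁅φ v, j⁆ ∈ J ∧ ⁅j, φ v⁆ ∈ J ∧ ⁅v, φ j⁆ ∈ J ∧ ⁅φ j, v⁆ ∈ J} with hfamJ
  set J : Submodule k (FreeLieAlgebra k (X ⊕ X)) := sInf famJ with hJ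
  set I : LieSubmodule k (FreeLieAlgebra k (X ⊕ X)) (FreeLieAlgebra k (X ⊕ X)) :=
    LieSubmodule.lieSpan k (FreeLieAlgebra k (X ⊕ X)) (S ∪ φ '' S) with hI
  -- dotted generators are in V₂
  have hdotV : ∀ x : X, FreeLieAlgebra.of k (Sum.inr x : X ⊕ X) ∈ V₂ := by
    intro x
    rw [hV₂]
    exact Submodule.mem_sInf.2 fun W hW => hW.1 x
  -- J is itself a member of famJ
  have hJmem : J ∈ famJ := by
    constructor
    · intro s hs
      exact Submodule.mem_sInf.2 fun W hW => hW.1 hs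
    · intro j hj v hv
      refine ⟨?_, ?_, ?_, ?_⟩ <;>
        exact Submodule.mem_sInf.2 fun W hW => by
          have hjW : j ∈ W := Submodule.mem_sInf.1 hj W hW
          first
            | exact (hW.2 j hjW v hv).1
            | exact (hW.2 j hjW v hv).2.1
            | exact (hW.2 j hjW v hv).2.2.1
            | exact (hW.2 j hjW v hv).2.2.2
  have hSJ : S ⊆ (J : Set (FreeLieAlgebra k (X ⊕ X))) := hJmem.1
  have hJclose := hJmem.2
  -- J ≤ V₂
  have hV₂mem : V₂ ∈ famJ := by
    refine ⟨hS, ?_⟩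
    intro j hj v hv
    rw [hV₂] at hj hv ⊢
    refine ⟨?_, ?_, ?_, ?_⟩ <;>
      refine Submodule.mem_sInf.2 fun W hW => ?_
    · exact (hW.2 v j (Submodule.mem_sInf.1 hv W hW) (Submodule.mem_sInf.1 hj W hW)).1
    · exact (hW.2 j v (Submodule.mem_sInf.1 hj W hW) (Submodule.mem_sInf.1 hv W hW)).2
    · exact (hW.2 v j (Submodule.mem_sInf.1 hv W hW) (Submodule.mem_sInf.1 hj W hW)).2
    · exact (hW.2 j v (Submodule.mem_sInf.1 hj W hW) (Submodule.mem_sInf.1 hv W hW)).1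
  have hJV₂ : J ≤ V₂ := sInf_le hV₂mem
  -- φ maps I into I
  have hφI : ∀ a : FreeLieAlgebra k (X ⊕ X), a ∈ I → φ a ∈ I := by
    let K₀ : LieSubmodule k (FreeLieAlgebra k (X ⊕ X)) (FreeLieAlgebra k (X ⊕ X)) :=
      { carrier := {a : FreeLieAlgebra k (X ⊕ X) | a ∈ I ∧ φ a ∈ I}
        add_mem' := by
          rintro a b ⟨ha1, ha2⟩ ⟨hb1, hb2⟩
          exact ⟨I.add_mem' ha1 hb1, by rw [map_add φ]; exact I.add_mem' ha2 hb2⟩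
        zero_mem' := ⟨I.zero_mem', by rw [map_zero φ]; exact I.zero_mem'⟩
        smul_mem' := by
          rintro c a ⟨ha1, ha2⟩
          exact ⟨I.smul_mem' c ha1, by rw [map_smul φ]; exact I.smul_mem' c ha2⟩
        lie_mem := by
          rintro x a ⟨ha1, ha2⟩
          exact ⟨I.lie_mem ha1, by rw [φ.map_lie]; exact I.lie_mem ha2⟩ }
    have hle : I ≤ K₀ := by
      rw [hI]
      apply LieSubmodule.lieSpan_le.2
      rintro a (haS | ⟨s, hsS, rfl⟩)
      · exact ⟨LieSubmodule.subset_lieSpan (Or.inl haS),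
          LieSubmodule.subset_lieSpan (Or.inr ⟨a, haS, rfl⟩)⟩
      · refine ⟨LieSubmodule.subset_lieSpan (Or.inr ⟨s, hsS, rfl⟩), ?_⟩
        rw [hφ2]
        exact LieSubmodule.subset_lieSpan (Or.inr ⟨s, hsS, rfl⟩)
    intro a ha
    exact (hle ha).2
  -- J ≤ I
  have hImem : (LieSubmodule.toSubmodule I) ∈ famJ := by
    refine ⟨fun s hs => LieSubmodule.subset_lieSpan (Or.inl hs), ?_⟩
    intro j hj v hv
    refine ⟨I.lie_mem hj, ?_, ?_, ?_⟩
    · rw [← lie_skew]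
      exact (LieSubmodule.toSubmodule I).neg_mem (I.lie_mem hj)
    · exact I.lie_mem (hφI j hj)
    · rw [← lie_skew]
      exact (LieSubmodule.toSubmodule I).neg_mem (I.lie_mem (hφI j hj))
  have hJI : J ≤ LieSubmodule.toSubmodule I := sInf_le hImem
  -- the grading homomorphism θ
  let θ : FreeLieAlgebra k (X ⊕ X) →ₗ⁅k⁆ Polynomial k ⊗[k] FreeLieAlgebra k (X ⊕ X) :=
    FreeLieAlgebra.lift k (Sum.elim
      (fun x => (1 : Polynomial k) ⊗ₜ[k] FreeLieAlgebra.of k (Sum.inl x : X ⊕ X))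
      (fun x => (Polynomial.X : Polynomial k) ⊗ₜ[k] FreeLieAlgebra.of k (Sum.inr x : X ⊕ X)))
  have hθl : ∀ x : X, θ (FreeLieAlgebra.of k (Sum.inl x : X ⊕ X)) =
      (1 : Polynomial k) ⊗ₜ[k] FreeLieAlgebra.of k (Sum.inl x : X ⊕ X) := fun x => by
    simp [θ, FreeLieAlgebra.lift_of_apply]
  have hθr : ∀ x : X, θ (FreeLieAlgebra.of k (Sum.inr x : X ⊕ X)) =
      (Polynomial.X : Polynomial k) ⊗ₜ[k] FreeLieAlgebra.of k (Sum.inr x : X ⊕ X) := fun x => by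
    simp [θ, FreeLieAlgebra.lift_of_apply]
  -- graded pieces
  let Lmod : ℕ → Submodule k (FreeLieAlgebra k (X ⊕ X)) := fun n =>
    LinearMap.eqLocus (θ : FreeLieAlgebra k (X ⊕ X) →ₗ[k] Polynomial k ⊗[k] FreeLieAlgebra k (X ⊕ X))
      (TensorProduct.mk k (Polynomial k) (FreeLieAlgebra k (X ⊕ X)) (Polynomial.X ^ n))
  have hLmod : ∀ n (a : FreeLieAlgebra k (X ⊕ X)),
      a ∈ Lmod n ↔ θ a = (Polynomial.X ^ n : Polynomial k) ⊗ₜ[k] a := by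
    intro n a; rfl
  have hLbr : ∀ m n (a b : FreeLieAlgebra k (X ⊕ X)),
      a ∈ Lmod m → b ∈ Lmod n → ⁅a, b⁆ ∈ Lmod (m + n) := by
    intro m n a b ha hb
    rw [hLmod] at ha hb ⊢
    rw [θ.map_lie, ha, hb, LieAlgebra.ExtendScalars.bracket_tmul, ← pow_add]
  -- φ lands in degree 0
  have hφ0 : ∀ a : FreeLieAlgebra k (X ⊕ X), θ (φ a) = (1 : Polynomial k) ⊗ₜ[k] (φ a) := by
    have : θ.comp φ = (auxOneTmul k (Polynomial k) (FreeLieAlgebra k (X ⊕ X))).comp φ := by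
      apply FreeLieAlgebra.hom_ext
      rintro (x | x) <;>
        simp [LieHom.comp_apply, hφl, hφr, hθl, auxOneTmul_apply]
    intro a; exact DFunLike.congr_fun this a
  have hφLmod0 : ∀ a : FreeLieAlgebra k (X ⊕ X), φ a ∈ Lmod 0 := by
    intro a
    rw [hLmod, pow_zero]
    exact hφ0 a
  -- V₂ is in degree 1
  have hV₂L1 : V₂ ≤ Lmod 1 := by
    rw [hV₂]
    apply sInf_le
    constructor
    · intro x
      rw [hLmod, pow_one]
      exact hθr x
    · intro a b ha hb
      rw [hLmod, pow_one] at ha hb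
      constructor
      · rw [hLmod, pow_one, θ.map_lie, hφ0, hb,
          LieAlgebra.ExtendScalars.bracket_tmul, one_mul]
      · rw [hLmod, pow_one, θ.map_lie, hφ0, ha,
          LieAlgebra.ExtendScalars.bracket_tmul, mul_one]
  -- the degree-1 projection
  let π : Polynomial k ⊗[k] FreeLieAlgebra k (X ⊕ X) →ₗ[k] FreeLieAlgebra k (X ⊕ X) :=
    (TensorProduct.lid k (FreeLieAlgebra k (X ⊕ X))).toLinearMap ∘ₗ
      LinearMap.rTensor (FreeLieAlgebra k (X ⊕ X)) (Polynomial.lcoeff k 1)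
  let E : FreeLieAlgebra k (X ⊕ X) →ₗ[k] FreeLieAlgebra k (X ⊕ X) :=
    π ∘ₗ (θ : FreeLieAlgebra k (X ⊕ X) →ₗ[k] Polynomial k ⊗[k] FreeLieAlgebra k (X ⊕ X))
  have hE : ∀ n (a : FreeLieAlgebra k (X ⊕ X)), a ∈ Lmod n →
      E a = if 1 = n then a else 0 := by
    intro n a ha
    rw [hLmod] at ha
    have h1 : E a = π ((Polynomial.X ^ n : Polynomial k) ⊗ₜ[k] a) := by
      simp only [E, LinearMap.comp_apply, LieHom.coe_toLinearMap, ha]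
    rw [h1]
    simp only [π, LinearMap.comp_apply, LinearMap.rTensor_tmul, LinearEquiv.coe_toLinearMap,
      TensorProduct.lid_tmul, Polynomial.lcoeff_apply, Polynomial.coeff_X_pow]
    split <;> simp
  -- the candidate ideal K
  set N : Submodule k (FreeLieAlgebra k (X ⊕ X)) :=
    ⨆ n : ℕ, (LieSubmodule.toSubmodule I ⊓ Lmod (n + 2)) with hN
  set K : Submodule k (FreeLieAlgebra k (X ⊕ X)) :=
    Submodule.span k (φ '' (J : Set (FreeLieAlgebra k (X ⊕ X)))) ⊔ J ⊔ N with hK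
  have hφJK : Submodule.span k (φ '' (J : Set (FreeLieAlgebra k (X ⊕ X)))) ≤ K :=
    le_trans le_sup_left le_sup_left
  have hJK : J ≤ K := le_trans le_sup_right le_sup_left
  have hNK : N ≤ K := le_sup_right
  have hNmem : ∀ (n : ℕ) (a : FreeLieAlgebra k (X ⊕ X)),
      a ∈ LieSubmodule.toSubmodule I → a ∈ Lmod (n + 2) → a ∈ N := by
    intro n a h1 h2
    exact Submodule.mem_iSup_of_mem n ⟨h1, h2⟩
  -- N is stable under bracketing with any graded element
  have hNstable : ∀ (g : FreeLieAlgebra k (X ⊕ X)) (ng : ℕ), g ∈ Lmod ng →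
      ∀ m ∈ N, ⁅g, m⁆ ∈ N := by
    intro g ng hg
    have hcom : N ≤ Submodule.comap ((LieAlgebra.ad k (FreeLieAlgebra k (X ⊕ X)) g) :
        FreeLieAlgebra k (X ⊕ X) →ₗ[k] FreeLieAlgebra k (X ⊕ X)) N := by
      refine iSup_le fun n => ?_
      rintro x ⟨hx1, hx2⟩
      have h1 : (⁅g, x⁆ : FreeLieAlgebra k (X ⊕ X)) ∈ LieSubmodule.toSubmodule I :=
        I.lie_mem hx1
      have h2 := hLbr ng (n + 2) g x hg hx2
      have h3 : ng + (n + 2) = (ng + n) + 2 := by ring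
      rw [h3] at h2
      have := hNmem (ng + n) _ h1 h2
      simpa [Submodule.mem_comap, LieAlgebra.ad_apply] using this
    intro m hm
    have := hcom hm
    simpa [Submodule.mem_comap, LieAlgebra.ad_apply] using this
  -- closure of K under bracketing with generators
  have hgen : ∀ y : X ⊕ X, ∀ m ∈ K, ⁅FreeLieAlgebra.of k y, m⁆ ∈ K := by
    intro y
    have hmain : Submodule.span k (φ '' (J : Set (FreeLieAlgebra k (X ⊕ X)))) ⊔ J ⊔ N ≤
        Submodule.comap ((LieAlgebra.ad k (FreeLieAlgebra k (X ⊕ X)) (FreeLieAlgebra.of k y)) :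
          FreeLieAlgebra k (X ⊕ X) →ₗ[k] FreeLieAlgebra k (X ⊕ X)) K := by
      refine sup_le (sup_le ?_ ?_) ?_
      · -- span φ J
        rw [Submodule.span_le]
        rintro _ ⟨j, hj, rfl⟩
        simp only [Submodule.mem_comap, LieAlgebra.ad_apply, SetLike.mem_coe]
        cases y with
        | inl x =>
            -- ⁅x̄, φ j⁆ = φ ⁅ẋ, φ j⁆ ∈ φ '' J
            have hvj : (⁅FreeLieAlgebra.of k (Sum.inr x : X ⊕ X), φ j⁆ : FreeLieAlgebra k (X ⊕ X)) ∈ J :=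
              (hJclose j hj _ (hdotV x)).2.2.1
            have heq : (⁅FreeLieAlgebra.of k (Sum.inl x : X ⊕ X), φ j⁆ : FreeLieAlgebra k (X ⊕ X)) =
                φ ⁅FreeLieAlgebra.of k (Sum.inr x : X ⊕ X), φ j⁆ := by
              rw [φ.map_lie, hφr, hφ2]
            rw [heq]
            exact hφJK (Submodule.subset_span ⟨_, hvj, rfl⟩)
        | inr x =>
            -- ⁅ẋ, φ j⁆ ∈ J
            exact hJK ((hJclose j hj _ (hdotV x)).2.2.1)
      · -- J
        intro j hj
        simp only [Submodule.mem_comap, LieAlgebra.ad_apply]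
        cases y with
        | inl x =>
            -- ⁅x̄, j⁆ = ⁅φ ẋ, j⁆ ∈ J
            have : (⁅φ (FreeLieAlgebra.of k (Sum.inr x : X ⊕ X)), j⁆ : FreeLieAlgebra k (X ⊕ X)) ∈ J :=
              (hJclose j hj _ (hdotV x)).1
            rw [hφr] at this
            exact hJK this
        | inr x =>
            -- ⁅ẋ, j⁆ ∈ I ⊓ Lmod 2 ≤ N
            have h1 : (⁅FreeLieAlgebra.of k (Sum.inr x : X ⊕ X), j⁆ : FreeLieAlgebra k (X ⊕ X)) ∈
                LieSubmodule.toSubmodule I := I.lie_mem (hJI hj)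
            have hg1 : FreeLieAlgebra.of k (Sum.inr x : X ⊕ X) ∈ Lmod 1 := by
              rw [hLmod, pow_one]; exact hθr x
            have h2 := hLbr 1 1 _ j hg1 (hV₂L1 (hJV₂ hj))
            have h3 : (1 : ℕ) + 1 = 0 + 2 := by norm_num
            rw [h3] at h2
            exact hNK (hNmem 0 _ h1 h2)
      · -- N
        intro m hm
        simp only [Submodule.mem_comap, LieAlgebra.ad_apply]
        cases y with
        | inl x =>
            have hg0 : FreeLieAlgebra.of k (Sum.inl x : X ⊕ X) ∈ Lmod 0 := by
              rw [← hφl x]; exact hφLmod0 _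
            exact hNK (hNstable _ 0 hg0 m hm)
        | inr x =>
            have hg1 : FreeLieAlgebra.of k (Sum.inr x : X ⊕ X) ∈ Lmod 1 := by
              rw [hLmod, pow_one]; exact hθr x
            exact hNK (hNstable _ 1 hg1 m hm)
    intro m hm
    have hm' : m ∈ Submodule.span k (φ '' (J : Set (FreeLieAlgebra k (X ⊕ X)))) ⊔ J ⊔ N := hm
    have := hmain hm'
    simpa [Submodule.mem_comap, LieAlgebra.ad_apply] using this
  have hKideal : ∀ x : FreeLieAlgebra k (X ⊕ X), ∀ m ∈ K, ⁅x, m⁆ ∈ K :=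
    auxBracketClosure K hgen
  -- I ≤ K
  have hIK : LieSubmodule.toSubmodule I ≤ K := by
    have hle : I ≤ ({ toSubmodule := K, lie_mem := fun {x m} hm => hKideal x m hm } :
        LieSubmodule k (FreeLieAlgebra k (X ⊕ X)) (FreeLieAlgebra k (X ⊕ X))) := by
      rw [hI]
      apply LieSubmodule.lieSpan_le.2
      rintro a (haS | ⟨s, hsS, rfl⟩)
      · exact hJK (hSJ haS)
      · exact hφJK (Submodule.subset_span ⟨s, hSJ hsS, rfl⟩)
    intro x hx
    exact hle hx
  -- hard direction
  have hard : V₂ ⊓ LieSubmodule.toSubmodule I ≤ J := by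
    intro a ha
    obtain ⟨haV, haI⟩ := Submodule.mem_inf.1 ha
    have haK : a ∈ K := hIK haI
    rw [hK] at haK
    obtain ⟨y, hy, d, hd, rfl⟩ := Submodule.mem_sup.1 haK
    obtain ⟨b, hb, c, hc, rfl⟩ := Submodule.mem_sup.1 hy
    have hEb : E b = 0 := by
      have hb0 : b ∈ Lmod 0 := by
        refine Submodule.span_le.2 ?_ hb
        rintro _ ⟨j, _, rfl⟩
        exact hφLmod0 j
      rw [hE 0 b hb0]; simp
    have hEc : E c = c := by
      have := hE 1 c (hV₂L1 (hJV₂ hc)); simpa using this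
    have hEd : E d = 0 := by
      have hdk : N ≤ LinearMap.ker E := by
        refine iSup_le fun n => ?_
        rintro x ⟨_, hx2⟩
        rw [LinearMap.mem_ker, hE (n + 2) x hx2]
        simp
      exact LinearMap.mem_ker.1 (hdk hd)
    have hEa : E (b + c + d) = b + c + d := by
      have := hE 1 (b + c + d) (hV₂L1 haV); simpa using this
    have hfin : b + c + d = c := by
      conv_lhs => rw [← hEa]
      rw [map_add, map_add, hEb, hEc, hEd, zero_add, add_zero]
    rw [hfin]
    exact hc
  exact le_antisymm (le_inf hJV₂ hJI) hard
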